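/- Let (σ_n) be a sequence of non-erasing substitutions σ_n: A_{n+1}^* → A_n^* with all alphabets of cardinality at most D, which is everywhere growing (min_{a ∈ A_n} |σ_0σ_1⋯σ_{n-1}(a)| → ∞). Let X be the associated S-adic shift with complexity function p_X. Then the topological entropy h_X = lim (log p_X(N))/N satisfies h_X ≤ inf_{n≥0} (log |A_n|)/β_n^-, where β_n^- = min_{i∈A_n} |σ_0⋯σ_{n-1}(i)|. In particular h_X = 0. -/

import Mathlib

open Filter Topology

/-- The composition `σ_0 σ_1 ⋯ σ_{n-1} : A_n^* → A_0^*` of the first `n` substitutions of a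
directive sequence over the alphabets `A_n = Fin (d n)`. -/
def compSubV (d : ℕ → ℕ) (σ : ∀ n, Fin (d (n + 1)) → List (Fin (d n))) :
    ∀ n, List (Fin (d n)) → List (Fin (d 0))
  | 0 => id
  | n + 1 => fun w => compSubV d σ n (w.flatMap (σ n))

/-- The language of the `S`-adic shift of a directive sequence: the intersection over `n` of
the factorial closures of `σ_0 ⋯ σ_{n-1}(A_n^*)`. -/
def sadicLanguage (d : ℕ → ℕ) (σ : ∀ n, Fin (d (n + 1)) → List (Fin (d n))) :
    Set (List (Fin (d 0))) :=
  ⋂ n : ℕ, {v | ∃ w : List (Fin (d n)), v <:+: compSubV d σ n w}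

/-- The complexity function of a language. -/
noncomputable def complexity {A : Type*} (L : Set (List A)) (n : ℕ) : ℕ :=
  {w | w ∈ L ∧ w.length = n}.ncard

section Aux

variable {A B : Type*}

lemma le_length_flatMap (f : A → List B) {β : ℕ} (hβ : ∀ a, β ≤ (f a).length) :
    ∀ l : List A, β * l.length ≤ (l.flatMap f).length := by
  intro l
  induction l with
  | nil => simp
  | cons a t ih =>
      simp only [List.flatMap_cons, List.length_append, List.length_cons]
      calc β * (t.length + 1) = β * t.length + β := by ring
        _ ≤ (t.flatMap f).length + (f a).length := add_le_add ih (hβ a)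
        _ = (f a).length + (t.flatMap f).length := by ring

lemma flatMap_drop_eq (f : A → List B) {C : ℕ} (hC : ∀ a, (f a).length ≤ C) :
    ∀ (w : List A) (s : ℕ), ∃ (w' : List A) (r : ℕ), r ≤ C ∧
      (w.flatMap f).drop s = (w'.flatMap f).drop r := by
  intro w
  induction w with
  | nil => intro s; exact ⟨[], 0, Nat.zero_le _, by simp⟩
  | cons a t ih =>
      intro s
      rcases lt_or_ge s (f a).length with h | h
      · exact ⟨a :: t, s, le_trans h.le (hC a), rfl⟩
      · obtain ⟨w', r, hr, heq⟩ := ih (s - (f a).length)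
        refine ⟨w', r, hr, ?_⟩
        rw [List.flatMap_cons, ← heq]
        have hs : s = (f a).length + (s - (f a).length) := by omega
        rw [hs, List.drop_length_add_append]
        congr 1
        omega

lemma flatMap_take_trunc (f : A → List B) {β : ℕ} (hβ : ∀ a, β ≤ (f a).length)
    (l : List A) (K r N : ℕ) (h : r + N ≤ β * K) :
    ((l.flatMap f).drop r).take N = (((l.take K).flatMap f).drop r).take N := by
  rcases le_or_gt l.length K with hl | hl
  · rw [List.take_of_length_le hl]
  · conv_lhs => rw [← List.take_append_drop K l]
    rw [List.flatMap_append]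
    have hlen : r + N ≤ ((l.take K).flatMap f).length := by
      refine h.trans ?_
      have := le_length_flatMap f hβ (l.take K)
      rwa [List.length_take, min_eq_left hl.le] at this
    rw [List.drop_append_of_le_length (by omega),
      List.take_append_of_le_length (by rw [List.length_drop]; omega)]

lemma infix_flatMap_structure (f : A → List B) {β C : ℕ}
    (hβ : ∀ a, β ≤ (f a).length) (hC : ∀ a, (f a).length ≤ C) (a0 : A)
    {v : List B} {w : List A} (hv : v <:+: w.flatMap f) {N K : ℕ} (hN : v.length = N)
    (hK : C + N ≤ β * K) :
    ∃ (l : List A) (r : ℕ), l.length = K ∧ r < C + 1 ∧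
      v = ((l.flatMap f).drop r).take N := by
  rcases Nat.eq_zero_or_pos N with hN0 | hN0
  · refine ⟨List.replicate K a0, 0, by simp, by omega, ?_⟩
    rw [hN0, List.take_zero]
    exact List.length_eq_zero_iff.mp (hN.trans hN0)
  obtain ⟨p, q, hpq⟩ := hv
  have hv1 : v = ((w.flatMap f).drop p.length).take N := by
    rw [← hpq, List.append_assoc, List.drop_left, ← hN, List.take_left]
  obtain ⟨w', r, hr, heq⟩ := flatMap_drop_eq f hC w p.length
  rw [heq] at hv1
  rw [flatMap_take_trunc f hβ w' K r N (by omega)] at hv1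
  set wK := w'.take K with hwK
  have hlenK : wK.length ≤ K := by simp [hwK, List.length_take]
  refine ⟨wK ++ List.replicate (K - wK.length) a0, r, by simp; omega, by omega, ?_⟩
  have hNle : r + N ≤ (wK.flatMap f).length := by
    have h2 := hN
    rw [hv1, List.length_take, List.length_drop] at h2
    omega
  rw [List.flatMap_append, List.drop_append_of_le_length (by omega),
    List.take_append_of_le_length (by rw [List.length_drop]; omega)]
  exact hv1

lemma level_ncard_le (f : A → List B) [Fintype A] {β C : ℕ}
    (hβ : ∀ a, β ≤ (f a).length) (hC : ∀ a, (f a).length ≤ C) (a0 : A)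
    (N K : ℕ) (hK : C + N ≤ β * K) :
    {v : List B | (∃ w : List A, v <:+: w.flatMap f) ∧ v.length = N}.ncard
      ≤ Fintype.card A ^ K * (C + 1) := by
  classical
  set G : List.Vector A K × Fin (C + 1) → List B :=
    fun x => ((x.1.1.flatMap f).drop x.2.1).take N with hG
  have hsub : {v : List B | (∃ w : List A, v <:+: w.flatMap f) ∧ v.length = N}
      ⊆ Set.range G := by
    rintro v ⟨⟨w, hvw⟩, hlen⟩
    obtain ⟨l, r, hl, hr, hveq⟩ := infix_flatMap_structure f hβ hC a0 hvw hlen hK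
    exact ⟨(⟨l, hl⟩, ⟨r, hr⟩), hveq.symm⟩
  calc {v : List B | (∃ w : List A, v <:+: w.flatMap f) ∧ v.length = N}.ncard
      ≤ (Set.range G).ncard := Set.ncard_le_ncard hsub (Set.finite_range G)
    _ = (G '' Set.univ).ncard := by rw [Set.image_univ]
    _ ≤ (Set.univ : Set (List.Vector A K × Fin (C + 1))).ncard :=
        Set.ncard_image_le Set.finite_univ
    _ = Nat.card (List.Vector A K × Fin (C + 1)) := Set.ncard_univ _
    _ = Fintype.card A ^ K * (C + 1) := by
        simp [Nat.card_eq_fintype_card, card_vector]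

end Aux

lemma compSubV_flatMap (d : ℕ → ℕ) (σ : ∀ n, Fin (d (n + 1)) → List (Fin (d n))) :
    ∀ (n : ℕ) (w : List (Fin (d n))),
      compSubV d σ n w = w.flatMap (fun c => compSubV d σ n [c]) := by
  intro n
  induction n with
  | zero => intro w; simp [compSubV]
  | succ n ih =>
      intro w
      show compSubV d σ n (w.flatMap (σ n)) = _
      rw [ih, List.flatMap_assoc]
      congr 1
      funext b
      show (σ n b).flatMap _ = compSubV d σ n ([b].flatMap (σ n))
      rw [ih]
      simp

lemma one_le_compSubV_len (d : ℕ → ℕ) (σ : ∀ n, Fin (d (n + 1)) → List (Fin (d n)))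
    (hne : ∀ n b, σ n b ≠ []) :
    ∀ (n : ℕ) (i : Fin (d n)), 1 ≤ (compSubV d σ n [i]).length := by
  intro n
  induction n with
  | zero => intro i; simp [compSubV]
  | succ n ih =>
      intro i
      have h1 : compSubV d σ (n + 1) [i] = compSubV d σ n (σ n i) := by
        show compSubV d σ n ([i].flatMap (σ n)) = _
        simp
      rw [h1, compSubV_flatMap]
      have h2 := le_length_flatMap (fun c => compSubV d σ n [c]) ih (σ n i)
      have h3 : 1 ≤ (σ n i).length := List.length_pos_iff.mpr (hne n i)
      omega

lemma length_le_compSubV (d : ℕ → ℕ) (σ : ∀ n, Fin (d (n + 1)) → List (Fin (d n)))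
    (hne : ∀ n b, σ n b ≠ []) (n : ℕ) (w : List (Fin (d n))) :
    w.length ≤ (compSubV d σ n w).length := by
  rw [compSubV_flatMap]
  have := le_length_flatMap (fun c => compSubV d σ n [c]) (one_le_compSubV_len d σ hne n) w
  omega

lemma complexity_sadic_pos (d : ℕ → ℕ) (hd : ∀ n, 0 < d n)
    (σ : ∀ n, Fin (d (n + 1)) → List (Fin (d n)))
    (hne : ∀ n b, σ n b ≠ []) (N : ℕ) :
    0 < complexity (sadicLanguage d σ) N := by
  classical
  set S : ℕ → Set (List (Fin (d 0))) :=
    fun n => {v | ∃ w : List (Fin (d n)), v <:+: compSubV d σ n w} with hS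
  have hanti : Antitone S := by
    refine antitone_nat_of_succ_le ?_
    rintro n v ⟨w, hv⟩
    exact ⟨w.flatMap (σ n), hv⟩
  set v_ : ℕ → List (Fin (d 0)) :=
    fun n => (compSubV d σ n (List.replicate N ⟨0, hd n⟩)).take N with hv_
  have hlenv : ∀ n, (v_ n).length = N := by
    intro n
    rw [hv_]
    simp only [List.length_take]
    refine min_eq_left ?_
    have := length_le_compSubV d σ hne n (List.replicate N ⟨0, hd n⟩)
    simpa using this
  have hmemv : ∀ n, v_ n ∈ S n := by
    intro n
    exact ⟨List.replicate N ⟨0, hd n⟩, (List.take_prefix _ _).isInfix⟩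
  set g : ℕ → List.Vector (Fin (d 0)) N := fun m => ⟨v_ m, hlenv m⟩ with hg
  obtain ⟨y, hy⟩ := Finite.exists_infinite_fiber g
  have hyInf : (g ⁻¹' {y}).Infinite := Set.infinite_coe_iff.mp hy
  have hymem : y.1 ∈ sadicLanguage d σ := by
    rw [sadicLanguage, Set.mem_iInter]
    intro n
    obtain ⟨m, hm, hnm⟩ := hyInf.exists_gt n
    have : v_ m = y.1 := by
      have : g m = y := hm
      rw [← this]
    rw [← this]
    exact hanti hnm.le (hmemv m)
  have hfin : {w | w ∈ sadicLanguage d σ ∧ w.length = N}.Finite :=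
    (List.finite_length_eq _ N).subset fun v hv => hv.2
  rw [complexity, Set.ncard_pos hfin]
  exact ⟨y.1, hymem, y.2⟩

theorem sadic_entropy_bound (d : ℕ → ℕ) (hd : ∀ n, 0 < d n)
    (D : ℕ) (hD : ∀ n, d n ≤ D)
    (σ : ∀ n, Fin (d (n + 1)) → List (Fin (d n)))
    (hne : ∀ n b, σ n b ≠ [])
    (hgrow : ∀ a : ∀ n, Fin (d n),
      Tendsto (fun n => (compSubV d σ n [a n]).length) atTop atTop) :
    ∃ h : ℝ,
      Tendsto (fun N => Real.log (complexity (sadicLanguage d σ) N) / N) atTop (𝓝 h) ∧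
      (∀ n : ℕ, h ≤ Real.log (d n) / (⨅ i : Fin (d n), ((compSubV d σ n [i]).length : ℝ))) ∧
      h = 0 := by
  classical
  have hnonempty : ∀ n, Nonempty (Fin (d n)) := fun n => ⟨⟨0, hd n⟩⟩
  refine ⟨0, ?_, ?_, rfl⟩
  · -- the main tendsto fact
    set p : ℕ → ℕ := fun N => complexity (sadicLanguage d σ) N with hp
    have hp1 : ∀ N, 1 ≤ p N := fun N => complexity_sadic_pos d hd σ hne N
    -- select minimizing letters
    have hsel : ∀ n, ∃ i0 : Fin (d n), ∀ i,
        (compSubV d σ n [i0]).length ≤ (compSubV d σ n [i]).length := fun n =>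
      Finite.exists_min _
    set a : ∀ n, Fin (d n) := fun n => (hsel n).choose with ha
    set β : ℕ → ℕ := fun n => (compSubV d σ n [a n]).length with hβ
    have hβle : ∀ n i, β n ≤ (compSubV d σ n [i]).length := fun n => (hsel n).choose_spec
    have hβtop : Tendsto β atTop atTop := hgrow a
    have hD1 : 1 ≤ D := le_trans (hd 0) (hD 0)
    have hlogD : 0 ≤ Real.log D := Real.log_nonneg (by exact_mod_cast hD1)
    rw [Metric.tendsto_atTop]
    intro ε hε
    obtain ⟨M, hM⟩ := exists_nat_gt (2 * Real.log D / ε)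
    obtain ⟨n, hn⟩ := (hβtop.eventually_ge_atTop (M + 1)).exists
    have hβpos : 0 < β n := by omega
    have hβR : (0 : ℝ) < β n := by exact_mod_cast hβpos
    obtain ⟨iC, hiC⟩ := Finite.exists_max (fun i : Fin (d n) => (compSubV d σ n [i]).length)
    set C : ℕ := (compSubV d σ n [iC]).length with hC
    have hCle : ∀ i : Fin (d n), (compSubV d σ n [i]).length ≤ C := hiC
    have hlogC : 0 ≤ Real.log (C + 1) := Real.log_nonneg (by push_cast; linarith)
    set A : ℝ := ((C : ℝ) / (β n) + 1) * Real.log D + Real.log (C + 1) with hA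
    have hA0 : 0 ≤ A := add_nonneg (mul_nonneg (by positivity) hlogD) hlogC
    clear_value A
    obtain ⟨N1, hN1⟩ := exists_nat_gt (2 * A / ε)
    refine ⟨N1 + 1, fun N hN => ?_⟩
    have hNpos : (0 : ℝ) < N := by
      have : 1 ≤ N := by omega
      exact_mod_cast Nat.lt_of_lt_of_le Nat.zero_lt_one this
    set K : ℕ := (C + N) / β n + 1 with hK
    have hKβ : C + N ≤ β n * K := by
      have h1 := Nat.div_add_mod (C + N) (β n)
      have h2 := Nat.mod_lt (C + N) hβpos
      calc C + N ≤ β n * ((C + N) / β n) + β n := by omega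
        _ = β n * K := by rw [hK, Nat.mul_add, Nat.mul_one]
    -- counting bound
    have hcount : p N ≤ D ^ K * (C + 1) := by
      have hsub1 : {w | w ∈ sadicLanguage d σ ∧ w.length = N} ⊆
          {v : List (Fin (d 0)) |
            (∃ w : List (Fin (d n)), v <:+: w.flatMap (fun c => compSubV d σ n [c])) ∧
            v.length = N} := by
        rintro v ⟨hvL, hvlen⟩
        refine ⟨?_, hvlen⟩
        obtain ⟨w, hw⟩ := Set.mem_iInter.mp hvL n
        exact ⟨w, by rwa [← compSubV_flatMap]⟩
      have hfin : {v : List (Fin (d 0)) |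
          (∃ w : List (Fin (d n)), v <:+: w.flatMap (fun c => compSubV d σ n [c])) ∧
          v.length = N}.Finite := (List.finite_length_eq _ N).subset fun v hv => hv.2
      calc p N ≤ _ := Set.ncard_le_ncard hsub1 hfin
        _ ≤ Fintype.card (Fin (d n)) ^ K * (C + 1) :=
            level_ncard_le _ (hβle n) hCle (a n) N K hKβ
        _ ≤ D ^ K * (C + 1) := by
            rw [Fintype.card_fin]
            exact Nat.mul_le_mul_right _ (Nat.pow_le_pow_left (hD n) K)
    -- real analysis
    have hpR : (1 : ℝ) ≤ p N := by exact_mod_cast hp1 N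
    have hlog1 : Real.log (p N) ≤ K * Real.log D + Real.log (C + 1) := by
      calc Real.log (p N) ≤ Real.log ((D : ℝ) ^ K * ((C : ℝ) + 1)) := by
            apply Real.log_le_log (by linarith)
            have : ((p N : ℕ) : ℝ) ≤ ((D ^ K * (C + 1) : ℕ) : ℝ) := by exact_mod_cast hcount
            push_cast at this
            linarith
        _ = K * Real.log D + Real.log (C + 1) := by
            rw [Real.log_mul (by positivity) (by positivity), Real.log_pow]
    have hKle : (K : ℝ) ≤ ((C : ℝ) + N) / β n + 1 := by
      have h := Nat.cast_div_le (α := ℝ) (m := C + N) (n := β n)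
      rw [hK]
      push_cast
      push_cast at h
      linarith
    have hmain : Real.log (p N) / N ≤ Real.log D / β n + A / N := by
      have heq : Real.log D / β n + A / N =
          ((((C : ℝ) + N) / β n + 1) * Real.log D + Real.log (C + 1)) / N := by
        rw [hA]
        field_simp
        ring
      rw [heq]
      gcongr
      have h3 : (K : ℝ) * Real.log D ≤ (((C : ℝ) + N) / β n + 1) * Real.log D :=
        mul_le_mul_of_nonneg_right hKle hlogD
      linarith
    -- conclude
    rw [Real.dist_eq, sub_zero,
      abs_of_nonneg (div_nonneg (Real.log_nonneg hpR) hNpos.le)]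
    have h1 : Real.log D / β n < ε / 2 := by
      rw [div_lt_iff₀ hβR]
      have hM2 : 2 * Real.log D < M * ε := by
        rw [div_lt_iff₀ hε] at hM; linarith
      have hβM : (M : ℝ) + 1 ≤ β n := by exact_mod_cast hn
      have hprod : ε * ((M : ℝ) + 1) ≤ ε * β n := mul_le_mul_of_nonneg_left hβM hε.le
      linarith
    have h2 : A / N < ε / 2 := by
      rw [div_lt_iff₀ hNpos]
      have hN2 : 2 * A < N1 * ε := by
        rw [div_lt_iff₀ hε] at hN1; linarith
      have hNN : (N1 : ℝ) + 1 ≤ N := by exact_mod_cast hN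
      have hprod : ε * ((N1 : ℝ) + 1) ≤ ε * N := mul_le_mul_of_nonneg_left hNN hε.le
      nlinarith [hε, hN2, hprod]
    linarith [hmain]
  · -- the infimum bound
    intro n
    have : Nonempty (Fin (d n)) := ⟨⟨0, hd n⟩⟩
    apply div_nonneg
    · exact Real.log_nonneg (by exact_mod_cast hd n)
    · exact le_ciInf fun i => by positivity
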